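/- Let F be a field of characteristic not 2 and let q be a quadratic form over F of dimension m with diagonalization ⟨a₁,…,a_m⟩, and let λ ∈ F×. Then the Hasse invariant satisfies c(λq) = (λ, (−1)^{m(m−1)/2} (det q)^{m−1}) · c(q), where (·,·) denotes the Hilbert symbol (class of the quaternion algebra) over F and c(q) = ∏_{i<j} (a_i, a_j). -/

import Mathlib

private lemma prod_pairs_eq {M : Type*} [CommMonoid M] {m : ℕ} (f : Fin m → Fin m → M) :
    ∏ p ∈ Finset.univ.filter (fun p : Fin m × Fin m => p.1 < p.2), f p.1 p.2 =
      ∏ i, ∏ j ∈ Finset.Ioi i, f i j := by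
  rw [Finset.prod_sigma']
  refine Finset.prod_nbij' (fun p => ⟨p.1, p.2⟩) (fun p => (p.1, p.2)) ?_ ?_ ?_ ?_ ?_ <;>
    simp [Finset.mem_Ioi]

private lemma sum_card_Ioi (m : ℕ) :
    ∑ i : Fin m, (Finset.Ioi i).card = m * (m - 1) / 2 := by
  simp only [Fin.card_Ioi]
  rw [Fin.sum_univ_eq_sum_range, ← Finset.sum_range_reflect]
  rw [← Finset.sum_range_id m]
  apply Finset.sum_congr rfl
  intro i hi
  simp only [Finset.mem_range] at hi
  omega

/-- The Hasse invariant of a diagonal quadratic form `⟨a₁,…,a_m⟩`: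
`c(q) = ∏_{i<j} (aᵢ, aⱼ)`, where `h` is the Hilbert symbol with values in a
commutative group `B` (e.g. the Brauer group, or `{±1}` over a local field). -/
noncomputable def hasseInv {F B : Type*} [Field F] [CommGroup B]
    (h : Fˣ → Fˣ → B) {m : ℕ} (a : Fin m → Fˣ) : B :=
  ∏ p ∈ Finset.univ.filter (fun p : Fin m × Fin m => p.1 < p.2), h (a p.1) (a p.2)

/-- For a diagonal quadratic form `q = ⟨a₁,…,a_m⟩` over a field `F` of
characteristic not 2 and `λ ∈ F×`,
`c(λq) = (λ, (−1)^{m(m−1)/2} (det q)^{m−1}) · c(q)`,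
where `(·,·)` is the Hilbert symbol (defined up to square class, symmetric,
multiplicative, and with `(a, −a) = 1`). -/
theorem hasse_of_scaled_form
    {F B : Type*} [Field F] [CommGroup B] (hchar : (2 : F) ≠ 0)
    (h : Fˣ → Fˣ → B)
    (hsq : ∀ a b c : Fˣ, h a (b * c ^ 2) = h a b)
    (hsymm : ∀ a b : Fˣ, h a b = h b a)
    (hmul : ∀ a b c : Fˣ, h (a * b) c = h a c * h b c)
    (hneg : ∀ a : Fˣ, h a (-a) = 1)
    (m : ℕ) (a : Fin m → Fˣ) (l : Fˣ) :
    hasseInv h (fun i => l * a i) =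
      h l ((-1) ^ (m * (m - 1) / 2) * (∏ i, a i) ^ (m - 1)) * hasseInv h a := by
  -- basic consequences of the axioms
  have h1 : ∀ b : Fˣ, h 1 b = 1 := by
    intro b
    have := hmul 1 1 b
    rw [one_mul] at this
    exact right_eq_mul.mp this
  have h2mul : ∀ a b c : Fˣ, h a (b * c) = h a b * h a c := by
    intro a b c
    rw [hsymm, hmul, hsymm b a, hsymm c a]
  have hone : ∀ a : Fˣ, h a 1 = 1 := fun a => by rw [hsymm]; exact h1 a
  -- the map `b ↦ h l b` is a monoid hom
  let φ : Fˣ →* B := MonoidHom.mk' (h l) (h2mul l)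
  have hφ : ∀ b : Fˣ, h l b = φ b := fun _ => rfl
  have hm1 : φ (-1) * φ (-1) = 1 := by
    rw [← map_mul]; norm_num
  have hll : h l l = φ (-1) := by
    have := hneg l
    rw [(neg_one_mul l).symm, h2mul] at this
    have h2 : φ (-1) * h l l = 1 := this
    calc h l l = (φ (-1) * φ (-1)) * h l l := by rw [hm1, one_mul]
    _ = φ (-1) * (φ (-1) * h l l) := by rw [mul_assoc]
    _ = φ (-1) := by rw [h2, mul_one]
  unfold hasseInv
  beta_reduce
  rw [prod_pairs_eq (fun i j => h (l * a i) (l * a j)), prod_pairs_eq (fun i j => h (a i) (a j))]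
  have key : ∀ i j : Fin m, h (l * a i) (l * a j) =
      φ (-1) * (φ (a i) * φ (a j)) * h (a i) (a j) := by
    intro i j
    rw [hmul, h2mul, h2mul, hll, hsymm (a i) l]
    simp only [hφ]
    ac_rfl
  simp only [key, Finset.prod_mul_distrib]
  have t1 : (∏ i : Fin m, ∏ _j ∈ Finset.Ioi i, φ (-1)) = φ ((-1) ^ (m * (m - 1) / 2)) := by
    simp only [Finset.prod_const, ← pow_mul, map_pow]
    rw [Finset.prod_pow_eq_pow_sum, sum_card_Ioi]
  have t2 : (∏ i : Fin m, ∏ _j ∈ Finset.Ioi i, φ (a i)) *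
      (∏ i : Fin m, ∏ j ∈ Finset.Ioi i, φ (a j)) = φ ((∏ i, a i) ^ (m - 1)) := by
    have h0 := Finset.prod_prod_Ioi_mul_eq_prod_prod_off_diag (fun x y => φ (a y))
    rw [← Finset.prod_mul_distrib]
    simp_rw [← Finset.prod_mul_distrib]
    rw [h0]
    simp only [Finset.prod_const, Finset.card_compl, Finset.card_singleton,
      Fintype.card_fin, map_pow, map_prod]
    rw [← Finset.prod_pow]
  rw [t1, t2, hφ, map_mul]
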